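/- Let p(x) be an irreducible polynomial of degree L over GF(2), let h_1 : Σ → GF(2)[x]/p(x) be a fully independent uniformly random symbol hash, and define the General hash h(a_1,...,a_n) = h_1(a_1)x^{n-1} + ... + h_1(a_n) in the field GF(2)[x]/p(x), with L ≥ n. Then the family of General hashes is pairwise independent: for any two distinct n-grams u, v and any y, y' in the field, P(h(u)=y and h(v)=y') = 1/4^L. -/

import Mathlib

open MeasureTheory Polynomial

set_option maxHeartbeats 1600000
set_option synthInstance.maxHeartbeats 400000

/-- With `p(x)` irreducible of degree `L` over `GF(2)` and a fully independent uniform symbol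
hash `h₁ : Σ → GF(2)[x]/p(x)`, the General hash
`h(a_1,…,a_n) = Σ h₁(a_i) x^{n-i}` is pairwise independent. -/
theorem stmt_5
    {Ω : Type*} [MeasurableSpace Ω] (μ : Measure Ω) [IsProbabilityMeasure μ]
    {A : Type*} (n L : ℕ) (hnL : n ≤ L)
    (p : Polynomial (ZMod 2)) (hp : Irreducible p) (hdeg : p.natDegree = L)
    (h₁ : Ω → A → AdjoinRoot p)
    (hmeas : ∀ (c : A) (r : AdjoinRoot p), MeasurableSet {ω | h₁ ω c = r})
    (hunif : ∀ (c : A) (r : AdjoinRoot p), μ {ω | h₁ ω c = r} = 1 / 2 ^ L)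
    (hind : ProbabilityTheory.iIndepFun (m := fun _ : A => (⊤ : MeasurableSpace (AdjoinRoot p)))
      (fun c ω => h₁ ω c) μ) :
    ∀ (u v : Fin n → A), u ≠ v → ∀ y y' : AdjoinRoot p,
      μ {ω | (∑ i : Fin n, h₁ ω (u i) * (AdjoinRoot.root p) ^ (n - 1 - (i : ℕ))) = y ∧
             (∑ i : Fin n, h₁ ω (v i) * (AdjoinRoot.root p) ^ (n - 1 - (i : ℕ))) = y'} =
        1 / 4 ^ L := by
  classical
  intro u v huv y y'
  haveI : Fact (Irreducible p) := ⟨hp⟩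
  have hp0 : p ≠ 0 := hp.ne_zero
  have hn : 0 < n := by
    rcases Nat.eq_zero_or_pos n with h | h
    · subst h; exact absurd (_root_.funext fun i : Fin 0 => i.elim0) huv
    · exact h
  have hL : 0 < L := lt_of_lt_of_le hn hnL
  -- finiteness of the field
  let pb := AdjoinRoot.powerBasis hp0
  haveI : Fintype (AdjoinRoot p) := Module.fintypeOfFintype pb.basis
  have hcardF : Fintype.card (AdjoinRoot p) = 2 ^ L := by
    rw [Module.card_fintype pb.basis]
    have hdim : pb.dim = L := by
      simpa [pb, AdjoinRoot.powerBasis] using hdeg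
    simp [hdim, ZMod.card]
  -- the symbol set
  set S : Finset A := Finset.image u Finset.univ ∪ Finset.image v Finset.univ with hS
  have huS : ∀ i, u i ∈ S := fun i =>
    Finset.mem_union_left _ (Finset.mem_image_of_mem u (Finset.mem_univ i))
  have hvS : ∀ i, v i ∈ S := fun i =>
    Finset.mem_union_right _ (Finset.mem_image_of_mem v (Finset.mem_univ i))
  -- coefficient vectors
  set c : A → AdjoinRoot p := fun a => ∑ i : Fin n,
    if u i = a then (AdjoinRoot.root p) ^ (n - 1 - (i : ℕ)) else 0 with hc_def
  set d : A → AdjoinRoot p := fun a => ∑ i : Fin n,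
    if v i = a then (AdjoinRoot.root p) ^ (n - 1 - (i : ℕ)) else 0 with hd_def
  -- generic resummation
  have hsum : ∀ (w : Fin n → A) (hw : ∀ i, w i ∈ S) (g : A → AdjoinRoot p),
      (∑ i : Fin n, g (w i) * (AdjoinRoot.root p) ^ (n - 1 - (i : ℕ)))
        = ∑ a ∈ S, g a * (∑ i : Fin n,
            if w i = a then (AdjoinRoot.root p) ^ (n - 1 - (i : ℕ)) else 0) := by
    intro w hw g
    simp_rw [Finset.mul_sum, mul_ite, mul_zero]
    rw [Finset.sum_comm]
    refine Finset.sum_congr rfl fun i _ => ?_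
    rw [Finset.sum_ite_eq]
    simp [hw i]
  -- polynomial representatives
  set qc : A → Polynomial (ZMod 2) := fun a => ∑ i : Fin n,
    if u i = a then (X : Polynomial (ZMod 2)) ^ (n - 1 - (i : ℕ)) else 0 with hqc_def
  set qd : A → Polynomial (ZMod 2) := fun a => ∑ i : Fin n,
    if v i = a then (X : Polynomial (ZMod 2)) ^ (n - 1 - (i : ℕ)) else 0 with hqd_def
  have hmkpow : ∀ k : ℕ, AdjoinRoot.mk p ((X : Polynomial (ZMod 2)) ^ k)
      = (AdjoinRoot.root p) ^ k := by
    intro k; rw [map_pow, AdjoinRoot.mk_X]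
  have hc : ∀ a, c a = AdjoinRoot.mk p (qc a) := by
    intro a
    rw [hc_def, hqc_def, map_sum]
    refine Finset.sum_congr rfl fun i _ => ?_
    rw [apply_ite (AdjoinRoot.mk p), map_zero, hmkpow]
  have hd : ∀ a, d a = AdjoinRoot.mk p (qd a) := by
    intro a
    rw [hd_def, hqd_def, map_sum]
    refine Finset.sum_congr rfl fun i _ => ?_
    rw [apply_ite (AdjoinRoot.mk p), map_zero, hmkpow]
  -- degree bound
  have hlt : ∀ q : Polynomial (ZMod 2), q.degree ≤ ((n - 1 : ℕ) : WithBot ℕ) →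
      q.degree < p.degree := by
    intro q hq
    refine lt_of_le_of_lt hq ?_
    rw [Polynomial.degree_eq_natDegree hp0, hdeg]
    exact_mod_cast (by omega : n - 1 < L)
  have hdeg_ite : ∀ (w : Fin n → A) (a : A),
      (∑ i : Fin n, if w i = a then (X : Polynomial (ZMod 2)) ^ (n - 1 - (i : ℕ)) else 0).degree
        ≤ ((n - 1 : ℕ) : WithBot ℕ) := by
    intro w a
    refine (Polynomial.degree_sum_le _ _).trans (Finset.sup_le fun i _ => ?_)
    by_cases h : w i = a
    · rw [if_pos h, Polynomial.degree_X_pow]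
      exact_mod_cast (by omega : n - 1 - (i : ℕ) ≤ n - 1)
    · rw [if_neg h, Polynomial.degree_zero]; exact bot_le
  -- equality of representatives from equality in the quotient
  have hmk_inj : ∀ q q' : Polynomial (ZMod 2), q.degree ≤ ((n - 1 : ℕ) : WithBot ℕ) →
      q'.degree ≤ ((n - 1 : ℕ) : WithBot ℕ) →
      AdjoinRoot.mk p q = AdjoinRoot.mk p q' → q = q' := by
    intro q q' hq hq' hmk
    have hdvd : p ∣ q - q' := AdjoinRoot.mk_eq_mk.mp hmk
    have hdlt : (q - q').degree < p.degree :=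
      hlt _ ((Polynomial.degree_sub_le q q').trans (max_le hq hq'))
    have := Polynomial.eq_zero_of_dvd_of_degree_lt hdvd hdlt
    exact sub_eq_zero.mp this
  -- coefficient extraction
  have hcoeff : ∀ (w : Fin n → A) (a : A) (i₀ : Fin n),
      (∑ i : Fin n, if w i = a then (X : Polynomial (ZMod 2)) ^ (n - 1 - (i : ℕ)) else 0).coeff
          (n - 1 - (i₀ : ℕ))
        = if w i₀ = a then 1 else 0 := by
    intro w a i₀
    rw [Polynomial.finset_sum_coeff]
    have hterm : ∀ i : Fin n,
        ((if w i = a then (X : Polynomial (ZMod 2)) ^ (n - 1 - (i : ℕ)) else 0).coeff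
          (n - 1 - (i₀ : ℕ)))
          = if i = i₀ then (if w i = a then 1 else 0) else 0 := by
      intro i
      have hi := i.isLt
      have hi₀ := i₀.isLt
      by_cases h : i = i₀
      · subst h
        simp [Polynomial.coeff_X_pow, apply_ite (fun q : Polynomial (ZMod 2) =>
          q.coeff (n - 1 - (i : ℕ)))]
      · have hne : n - 1 - (i₀ : ℕ) ≠ n - 1 - (i : ℕ) := by
          have : (i : ℕ) ≠ (i₀ : ℕ) := fun hh => h (Fin.ext hh)
          omega
        rw [if_neg h, apply_ite (fun q : Polynomial (ZMod 2) => q.coeff (n - 1 - (i₀ : ℕ)))]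
        simp [Polynomial.coeff_X_pow, hne]
    simp_rw [hterm]
    rw [Finset.sum_ite_eq']
    simp
  -- the geometric sum is nonzero
  set qs : Polynomial (ZMod 2) := ∑ i : Fin n, (X : Polynomial (ZMod 2)) ^ (n - 1 - (i : ℕ))
    with hqs_def
  have hqs_mk : AdjoinRoot.mk p qs = ∑ i : Fin n, (AdjoinRoot.root p) ^ (n - 1 - (i : ℕ)) := by
    rw [hqs_def, map_sum]
    exact Finset.sum_congr rfl fun i _ => hmkpow _
  have hqs_deg : qs.degree ≤ ((n - 1 : ℕ) : WithBot ℕ) := by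
    rw [hqs_def]
    refine (Polynomial.degree_sum_le _ _).trans (Finset.sup_le fun i _ => ?_)
    rw [Polynomial.degree_X_pow]
    exact_mod_cast (by omega : n - 1 - (i : ℕ) ≤ n - 1)
  have hqs_ne : qs ≠ 0 := by
    intro h0
    have hcoeff0 : qs.coeff (n - 1) = 1 := by
      rw [hqs_def, Polynomial.finset_sum_coeff]
      have hterm : ∀ i : Fin n, ((X : Polynomial (ZMod 2)) ^ (n - 1 - (i : ℕ))).coeff (n - 1)
          = if i = (⟨0, hn⟩ : Fin n) then 1 else 0 := by
        intro i
        have hi := i.isLt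
        rw [Polynomial.coeff_X_pow]
        by_cases h : (i : ℕ) = 0
        · simp [Fin.ext_iff, h]
        · have h1 : ¬ (n - 1 = n - 1 - (i : ℕ)) := by omega
          have h2 : ¬ (i = (⟨0, hn⟩ : Fin n)) := by simp [Fin.ext_iff, h]
          rw [if_neg h1, if_neg h2]
      simp_rw [hterm]
      rw [Finset.sum_ite_eq']
      simp
    rw [h0] at hcoeff0
    simp at hcoeff0
  have hmkqs_ne : AdjoinRoot.mk p qs ≠ 0 := by
    intro h0
    have hdvd : p ∣ qs := AdjoinRoot.mk_eq_zero.mp h0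
    have := Polynomial.eq_zero_of_dvd_of_degree_lt hdvd (hlt _ hqs_deg)
    exact hqs_ne this
  -- sums of coefficient vectors
  have hSc : ∑ a ∈ S, c a = AdjoinRoot.mk p qs := by
    have := hsum u huS (fun _ => 1)
    simp only [one_mul] at this
    rw [hqs_mk, ← this]
  have hSd : ∑ a ∈ S, d a = AdjoinRoot.mk p qs := by
    have := hsum v hvS (fun _ => 1)
    simp only [one_mul] at this
    rw [hqs_mk, ← this]
  -- the key linear-independence lemma
  have hkey : ∀ α β : AdjoinRoot p, (∀ a : A, α * c a + β * d a = 0) → α = 0 ∧ β = 0 := by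
    intro α β hab
    have hsum0 : (α + β) * AdjoinRoot.mk p qs = 0 := by
      have h1 : ∑ a ∈ S, (α * c a + β * d a) = 0 := by
        simp [hab]
      rw [Finset.sum_add_distrib, ← Finset.mul_sum, ← Finset.mul_sum, hSc, hSd] at h1
      linear_combination h1
    have hαβ : α + β = 0 := by
      rcases mul_eq_zero.mp hsum0 with h | h
      · exact h
      · exact absurd h hmkqs_ne
    have hβ : β = -α := by linear_combination hαβ
    by_cases hα : α = 0
    · exact ⟨hα, by rw [hβ, hα, neg_zero]⟩
    · exfalso
      apply huv
      have hcd : ∀ a, c a = d a := by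
        intro a
        have h2 : α * (c a - d a) = 0 := by
          have := hab a
          rw [hβ] at this
          linear_combination this
        rcases mul_eq_zero.mp h2 with h | h
        · exact absurd h hα
        · exact sub_eq_zero.mp h
      funext i₀
      have hq : qc (u i₀) = qd (u i₀) := by
        refine hmk_inj _ _ ?_ ?_ ?_
        · exact hdeg_ite u (u i₀)
        · exact hdeg_ite v (u i₀)
        · rw [← hc, ← hd]; exact hcd (u i₀)
      have h1 : (qc (u i₀)).coeff (n - 1 - (i₀ : ℕ)) = 1 := by
        rw [hqc_def]
        rw [hcoeff u (u i₀) i₀, if_pos rfl]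
      have h2 : (qd (u i₀)).coeff (n - 1 - (i₀ : ℕ)) = if v i₀ = u i₀ then 1 else 0 := by
        rw [hqd_def]
        exact hcoeff v (u i₀) i₀
      rw [hq, h2] at h1
      by_cases h : v i₀ = u i₀
      · exact h.symm
      · rw [if_neg h] at h1
        exact absurd h1 (by decide)
  -- the linear map
  let φu : ({x // x ∈ S} → AdjoinRoot p) →ₗ[AdjoinRoot p] AdjoinRoot p :=
    { toFun := fun g => ∑ a : {x // x ∈ S}, g a * c ↑a
      map_add' := fun g h => by simp [add_mul, Finset.sum_add_distrib]
      map_smul' := fun m g => by simp [Finset.mul_sum, smul_eq_mul, mul_assoc] }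
  let φv : ({x // x ∈ S} → AdjoinRoot p) →ₗ[AdjoinRoot p] AdjoinRoot p :=
    { toFun := fun g => ∑ a : {x // x ∈ S}, g a * d ↑a
      map_add' := fun g h => by simp [add_mul, Finset.sum_add_distrib]
      map_smul' := fun m g => by simp [Finset.mul_sum, smul_eq_mul, mul_assoc] }
  let φ : ({x // x ∈ S} → AdjoinRoot p) →ₗ[AdjoinRoot p] AdjoinRoot p × AdjoinRoot p := φu.prod φv
  have hφu_apply : ∀ g : {x // x ∈ S} → AdjoinRoot p, φu g = ∑ a : {x // x ∈ S}, g a * c ↑a := fun _ => rfl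
  have hφv_apply : ∀ g : {x // x ∈ S} → AdjoinRoot p, φv g = ∑ a : {x // x ∈ S}, g a * d ↑a := fun _ => rfl
  have hφ_apply : ∀ g : {x // x ∈ S} → AdjoinRoot p, φ g = (φu g, φv g) := fun _ => rfl
  -- evaluation at Pi.single
  have hsingle : ∀ (e : A → AdjoinRoot p) (a0 : {x // x ∈ S}),
      (∑ a : {x // x ∈ S}, (Pi.single a0 (1 : AdjoinRoot p) : {x // x ∈ S} → AdjoinRoot p) a * e ↑a) = e ↑a0 := by
    intro e a0
    rw [Fintype.sum_eq_single a0]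
    · simp
    · intro b hb
      rw [Pi.single_eq_of_ne hb, zero_mul]
  -- surjectivity of φ
  have hsurj : Function.Surjective φ := by
    rw [← LinearMap.range_eq_top]
    by_contra hne
    obtain ⟨f, hf0, hfmap⟩ := Submodule.exists_dual_map_eq_bot_of_lt_top
      (lt_top_iff_ne_top.mpr hne) inferInstance
    have hfz : ∀ g : {x // x ∈ S} → AdjoinRoot p, f (φ g) = 0 := by
      intro g
      have hmem : f (φ g) ∈ (LinearMap.range φ).map f :=
        Submodule.mem_map_of_mem (LinearMap.mem_range_self φ g)
      rwa [hfmap, Submodule.mem_bot] at hmem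
    set α := f (1, 0) with hα_def
    set β := f (0, 1) with hβ_def
    have hfval : ∀ z : AdjoinRoot p × AdjoinRoot p, f z = z.1 * α + z.2 * β := by
      intro z
      have hz : z = z.1 • ((1 : AdjoinRoot p), (0 : AdjoinRoot p)) + z.2 • ((0 : AdjoinRoot p), (1 : AdjoinRoot p)) := by
        ext <;> simp
      conv_lhs => rw [hz]
      rw [map_add, _root_.map_smul, _root_.map_smul, smul_eq_mul, smul_eq_mul]
    have hzero : ∀ a : A, α * c a + β * d a = 0 := by
      intro a
      by_cases ha : a ∈ S
      · have := hfz (Pi.single (⟨a, ha⟩ : {x // x ∈ S}) (1 : AdjoinRoot p) : {x // x ∈ S} → AdjoinRoot p)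
        rw [hfval, hφ_apply, hφu_apply, hφv_apply, hsingle c ⟨a, ha⟩, hsingle d ⟨a, ha⟩] at this
        linear_combination this
      · have hca : c a = 0 := by
          rw [hc_def]
          exact Finset.sum_eq_zero fun i _ => if_neg fun h => ha (by rw [← h]; exact huS i)
        have hda : d a = 0 := by
          rw [hd_def]
          exact Finset.sum_eq_zero fun i _ => if_neg fun h => ha (by rw [← h]; exact hvS i)
        rw [hca, hda, mul_zero, mul_zero, add_zero]
    obtain ⟨hα, hβ⟩ := hkey α β hzero
    apply hf0
    apply LinearMap.ext
    intro z
    rw [hfval, hα, hβ, mul_zero, mul_zero, add_zero, LinearMap.zero_apply]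
  -- fiber cardinalities
  set N : ℕ := Fintype.card {g : {x // x ∈ S} → AdjoinRoot p // φ g = (y, y')} with hN_def
  have hfibcard : ∀ z : AdjoinRoot p × AdjoinRoot p,
      Fintype.card {g : {x // x ∈ S} → AdjoinRoot p // φ g = z} = N := by
    intro z
    obtain ⟨g₁, hg₁⟩ := hsurj z
    obtain ⟨g₂, hg₂⟩ := hsurj (y, y')
    rw [hN_def]
    refine Fintype.card_congr ⟨fun gp => ⟨gp.1 - g₁ + g₂, ?_⟩,
      fun gp => ⟨gp.1 - g₂ + g₁, ?_⟩, fun gp => ?_, fun gp => ?_⟩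
    · rw [map_add, map_sub, gp.2, hg₁, hg₂]; abel
    · rw [map_add, map_sub, gp.2, hg₁, hg₂]; abel
    · exact Subtype.ext (by show _ - _ + _ - _ + _ = _; rw [add_sub_cancel_right, sub_add_cancel])
    · exact Subtype.ext (by show _ - _ + _ - _ + _ = _; rw [add_sub_cancel_right, sub_add_cancel])
  have hcount : Fintype.card ({x // x ∈ S} → AdjoinRoot p) = Fintype.card (AdjoinRoot p × AdjoinRoot p) * N := by
    calc Fintype.card ({x // x ∈ S} → AdjoinRoot p)
        = Fintype.card (Σ z : AdjoinRoot p × AdjoinRoot p, {g : {x // x ∈ S} → AdjoinRoot p // φ g = z}) :=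
          (Fintype.card_congr (Equiv.sigmaFiberEquiv φ)).symm
      _ = ∑ z : AdjoinRoot p × AdjoinRoot p, Fintype.card {g : {x // x ∈ S} → AdjoinRoot p // φ g = z} := Fintype.card_sigma
      _ = ∑ _z : AdjoinRoot p × AdjoinRoot p, N := Finset.sum_congr rfl fun z _ => hfibcard z
      _ = Fintype.card (AdjoinRoot p × AdjoinRoot p) * N := by rw [Finset.sum_const, smul_eq_mul, Fintype.card]
  have hNnat : (2 ^ L) ^ S.card = 4 ^ L * N := by
    have h1 : Fintype.card ({x // x ∈ S} → AdjoinRoot p) = (2 ^ L) ^ S.card := by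
      rw [Fintype.card_fun, hcardF, Fintype.card_coe]
    have h2 : Fintype.card (AdjoinRoot p × AdjoinRoot p) = 4 ^ L := by
      rw [Fintype.card_prod, hcardF, ← mul_pow]; norm_num
    rw [← h1, hcount, h2]
  have hNpos : 0 < N := by
    rw [hN_def]
    obtain ⟨g₀, hg₀⟩ := hsurj (y, y')
    exact Fintype.card_pos_iff.mpr ⟨⟨g₀, hg₀⟩⟩
  -- the events
  set ext : ({x // x ∈ S} → AdjoinRoot p) → A → AdjoinRoot p :=
    fun g a => if h : a ∈ S then g ⟨a, h⟩ else 0 with hext_def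
  set T : ({x // x ∈ S} → AdjoinRoot p) → Set Ω :=
    fun g => ⋂ a ∈ S, {ω | h₁ ω a = ext g a} with hT_def
  set R : Ω → {x // x ∈ S} → AdjoinRoot p := fun ω a => h₁ ω ↑a with hR_def
  have hTg : ∀ (g : {x // x ∈ S} → AdjoinRoot p) (ω : Ω), ω ∈ T g ↔ R ω = g := by
    intro g ω
    rw [hT_def]
    simp only [Set.mem_iInter, Set.mem_setOf_eq]
    constructor
    · intro h
      funext a
      have := h ↑a a.2
      rw [hext_def] at this
      simpa [a.2] using this
    · intro h a ha
      rw [hext_def]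
      simp only [ha, dif_pos]
      exact congrFun h ⟨a, ha⟩
  have hTmeas : ∀ g : {x // x ∈ S} → AdjoinRoot p, MeasurableSet (T g) := by
    intro g
    rw [hT_def]
    exact MeasurableSet.biInter S.countable_toSet fun a _ => hmeas a _
  have hTμ : ∀ g : {x // x ∈ S} → AdjoinRoot p, μ (T g) = (1 / 2 ^ L : ENNReal) ^ S.card := by
    intro g
    rw [hT_def]
    have hmb := hind.meas_biInter (S := S) (s := fun a => {ω | h₁ ω a = ext g a})
      (fun a _ => ⟨{ext g a}, trivial, rfl⟩)
    rw [hmb, Finset.prod_congr rfl fun a _ => hunif a (ext g a), Finset.prod_const]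
  -- splitting the event as a union over fibers
  have hEu : ∀ ω : Ω, (∑ i : Fin n, h₁ ω (u i) * (AdjoinRoot.root p) ^ (n - 1 - (i : ℕ)))
      = φu (R ω) := by
    intro ω
    rw [hsum u huS (h₁ ω), hφu_apply]
    rw [← Finset.sum_coe_sort S (fun x => h₁ ω x * c x)]
  have hEv : ∀ ω : Ω, (∑ i : Fin n, h₁ ω (v i) * (AdjoinRoot.root p) ^ (n - 1 - (i : ℕ)))
      = φv (R ω) := by
    intro ω
    rw [hsum v hvS (h₁ ω), hφv_apply]
    rw [← Finset.sum_coe_sort S (fun x => h₁ ω x * d x)]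
  have hEevent : {ω | (∑ i : Fin n, h₁ ω (u i) * (AdjoinRoot.root p) ^ (n - 1 - (i : ℕ))) = y ∧
             (∑ i : Fin n, h₁ ω (v i) * (AdjoinRoot.root p) ^ (n - 1 - (i : ℕ))) = y'}
      = ⋃ g ∈ Finset.univ.filter (fun g : {x // x ∈ S} → AdjoinRoot p => φ g = (y, y')), T g := by
    ext ω
    simp only [Set.mem_setOf_eq, Set.mem_iUnion, Finset.mem_filter, Finset.mem_univ, true_and,
      exists_prop]
    constructor
    · rintro ⟨h1, h2⟩
      refine ⟨R ω, ?_, (hTg _ ω).mpr rfl⟩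
      rw [hφ_apply, ← hEu ω, ← hEv ω, h1, h2]
    · rintro ⟨g, hg, hT⟩
      have hRg : R ω = g := (hTg g ω).mp hT
      rw [hφ_apply] at hg
      have := Prod.ext_iff.mp hg
      constructor
      · rw [hEu ω, hRg]; exact this.1
      · rw [hEv ω, hRg]; exact this.2
  have hdisj : (↑(Finset.univ.filter (fun g : {x // x ∈ S} → AdjoinRoot p => φ g = (y, y'))) :
      Set ({x // x ∈ S} → AdjoinRoot p)).PairwiseDisjoint T := by
    intro g₁ h1 g₂ h2 hne
    refine Set.disjoint_left.mpr fun ω hω1 hω2 => ?_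
    exact hne (((hTg g₁ ω).mp hω1).symm.trans ((hTg g₂ ω).mp hω2))
  rw [hEevent, measure_biUnion_finset hdisj fun g _ => hTmeas g]
  rw [Finset.sum_congr rfl fun g _ => hTμ g, Finset.sum_const]
  have hfilter : (Finset.univ.filter (fun g : {x // x ∈ S} → AdjoinRoot p => φ g = (y, y'))).card = N := by
    rw [hN_def, Fintype.card_subtype]
  rw [hfilter, nsmul_eq_mul]
  -- final arithmetic in ℝ≥0∞
  have hcast : ((2 : ENNReal) ^ L) ^ S.card = 4 ^ L * (N : ENNReal) := by
    have := hNnat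
    exact_mod_cast congrArg (Nat.cast : ℕ → ENNReal) this
  have hN0 : (N : ENNReal) ≠ 0 := Nat.cast_ne_zero.mpr hNpos.ne'
  have hNtop : (N : ENNReal) ≠ ⊤ := ENNReal.natCast_ne_top N
  have h4L0 : ((4 : ENNReal) ^ L) ≠ 0 := by positivity
  have h4Ltop : ((4 : ENNReal) ^ L) ≠ ⊤ := by
    exact ENNReal.pow_ne_top (by norm_num)
  rw [one_div, ← ENNReal.inv_pow, hcast]
  rw [ENNReal.mul_inv (Or.inl h4L0) (Or.inl h4Ltop)]
  rw [← mul_assoc, mul_comm (N : ENNReal) _, mul_assoc, ENNReal.mul_inv_cancel hN0 hNtop,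
    mul_one, one_div]
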